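/- Let n ≥ 2 and let W be a real symmetric n×n matrix with tr W > 0 and (tr W)² > tr(W²) (equivalently, the eigenvalue vector of W lies in Γ_2^+). Then the operator norm of W is strictly less than tr W; in particular |W_{ij}| < tr W for all indices i, j, and both matrices (tr W)·I − W and (tr W)·I + W are positive definite. -/

import Mathlib

open Finset Matrix

/-- **Entries and operator norm of a matrix in the `Γ₂⁺` cone are controlled by the trace.**
Let `W` be a real symmetric `n×n` matrix (`n ≥ 2`) with `tr W > 0` and
`(tr W)² > tr(W²)`.  Then the operator norm of `W` (as an operator on Euclidean space)
is strictly less than `tr W`; in particular `|W_{ij}| < tr W` for all `i, j`, and both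
`(tr W)·I − W` and `(tr W)·I + W` are positive definite. -/
theorem stmt_7 (n : ℕ) (hn : 2 ≤ n) (W : Matrix (Fin n) (Fin n) ℝ) (hW : W.IsSymm)
    (htr : 0 < Matrix.trace W)
    (h2 : Matrix.trace (W * W) < (Matrix.trace W) ^ 2) :
    ‖LinearMap.toContinuousLinearMap (Matrix.toEuclideanLin W)‖ < Matrix.trace W ∧
      (∀ i j, |W i j| < Matrix.trace W) ∧
      (Matrix.trace W • (1 : Matrix (Fin n) (Fin n) ℝ) - W).PosDef ∧
      (Matrix.trace W • (1 : Matrix (Fin n) (Fin n) ℝ) + W).PosDef := by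
  set t := Matrix.trace W with ht
  have hsymm : ∀ i j, W j i = W i j := fun i j => by
    conv_lhs => rw [← hW]
    rfl
  set F2 : ℝ := ∑ i, ∑ j, W i j ^ 2 with hF2def
  have hF2 : F2 = Matrix.trace (W * W) := by
    simp only [Matrix.trace, Matrix.diag, Matrix.mul_apply, hF2def]
    refine Finset.sum_congr rfl fun i _ => Finset.sum_congr rfl fun j _ => ?_
    rw [hsymm i j, sq]
  have hF2lt : F2 < t ^ 2 := hF2 ▸ h2
  have hF2nonneg : 0 ≤ F2 := Finset.sum_nonneg fun i _ =>
    Finset.sum_nonneg fun j _ => sq_nonneg _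
  -- row bound
  have hrow : ∀ (x : Fin n → ℝ) (i : Fin n),
      (∑ j, W i j * x j) ^ 2 ≤ (∑ j, W i j ^ 2) * ∑ j, x j ^ 2 := fun x i =>
    Finset.sum_mul_sq_le_sq_mul_sq _ _ _
  have hmulvec_sq : ∀ (x : Fin n → ℝ),
      (∑ i, (W *ᵥ x) i ^ 2) ≤ F2 * ∑ j, x j ^ 2 := by
    intro x
    have : ∀ i : Fin n, (W *ᵥ x) i ^ 2 ≤ (∑ j, W i j ^ 2) * ∑ j, x j ^ 2 := fun i => by
      simpa [Matrix.mulVec, dotProduct] using hrow x i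
    calc ∑ i, (W *ᵥ x) i ^ 2 ≤ ∑ i, (∑ j, W i j ^ 2) * ∑ j, x j ^ 2 :=
          Finset.sum_le_sum fun i _ => this i
      _ = F2 * ∑ j, x j ^ 2 := by rw [← Finset.sum_mul]
  have hsqrtF2 : Real.sqrt F2 < t := (Real.sqrt_lt' htr).2 hF2lt
  -- operator norm
  have hop : ‖LinearMap.toContinuousLinearMap (Matrix.toEuclideanLin W)‖ ≤ Real.sqrt F2 := by
    apply ContinuousLinearMap.opNorm_le_bound _ (Real.sqrt_nonneg _)
    intro x
    rw [EuclideanSpace.norm_eq, EuclideanSpace.norm_eq]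
    have h1 : ∀ i, ‖(LinearMap.toContinuousLinearMap (Matrix.toEuclideanLin W) x) i‖ ^ 2
        = ((W *ᵥ (fun j => x j)) i) ^ 2 := fun i => by
      simp [Matrix.toEuclideanLin_apply, Real.norm_eq_abs, sq_abs]
    calc Real.sqrt (∑ i, ‖(LinearMap.toContinuousLinearMap (Matrix.toEuclideanLin W) x) i‖ ^ 2)
        = Real.sqrt (∑ i, ((W *ᵥ (fun j => x j)) i) ^ 2) := by
          congr 1; exact Finset.sum_congr rfl fun i _ => h1 i
      _ ≤ Real.sqrt (F2 * ∑ j, x j ^ 2) := Real.sqrt_le_sqrt (hmulvec_sq _)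
      _ = Real.sqrt F2 * Real.sqrt (∑ j, x j ^ 2) := Real.sqrt_mul hF2nonneg _
      _ = Real.sqrt F2 * Real.sqrt (∑ j, ‖x j‖ ^ 2) := by
          congr 2; exact Finset.sum_congr rfl fun j _ => by rw [Real.norm_eq_abs, sq_abs]
  have hopnorm : ‖LinearMap.toContinuousLinearMap (Matrix.toEuclideanLin W)‖ < t :=
    lt_of_le_of_lt hop hsqrtF2
  -- entries
  have hentries : ∀ i j, |W i j| < t := by
    intro i j
    have h1 : W i j ^ 2 ≤ F2 := by
      have h0 : W i j ^ 2 ≤ ∑ j', W i j' ^ 2 :=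
        Finset.single_le_sum (f := fun j' => W i j' ^ 2) (fun j' _ => sq_nonneg _)
          (Finset.mem_univ j)
      refine h0.trans ?_
      exact Finset.single_le_sum (f := fun i' => ∑ j', W i' j' ^ 2)
        (fun i' _ => Finset.sum_nonneg fun j' _ => sq_nonneg _) (Finset.mem_univ i)
    exact abs_lt_of_sq_lt_sq (h1.trans_lt hF2lt) htr.le
  -- quadratic form bound
  have hquad : ∀ x : Fin n → ℝ, x ≠ 0 →
      |x ⬝ᵥ (W *ᵥ x)| < t * ∑ i, x i ^ 2 := by
    intro x hx
    set S : ℝ := ∑ i, x i ^ 2 with hS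
    have hSpos : 0 < S := by
      have : ∃ i, x i ≠ 0 := by
        by_contra h
        push_neg at h
        exact hx (funext h)
      obtain ⟨i, hi⟩ := this
      exact Finset.sum_pos' (fun j _ => sq_nonneg _) ⟨i, Finset.mem_univ i, by positivity⟩
    have hcs : (x ⬝ᵥ (W *ᵥ x)) ^ 2 ≤ S * (F2 * S) := by
      have h1 : (∑ i, x i * (W *ᵥ x) i) ^ 2 ≤ (∑ i, x i ^ 2) * ∑ i, (W *ᵥ x) i ^ 2 :=
        Finset.sum_mul_sq_le_sq_mul_sq _ _ _
      have h2' : (∑ i, x i ^ 2) * (∑ i, (W *ᵥ x) i ^ 2) ≤ S * (F2 * S) :=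
        mul_le_mul_of_nonneg_left (hmulvec_sq x) hSpos.le
      calc (x ⬝ᵥ (W *ᵥ x)) ^ 2 = (∑ i, x i * (W *ᵥ x) i) ^ 2 := by rfl
        _ ≤ (∑ i, x i ^ 2) * ∑ i, (W *ᵥ x) i ^ 2 := h1
        _ ≤ S * (F2 * S) := h2'
    have hlt : (x ⬝ᵥ (W *ᵥ x)) ^ 2 < (t * S) ^ 2 := by
      calc (x ⬝ᵥ (W *ᵥ x)) ^ 2 ≤ S * (F2 * S) := hcs
        _ < S * (t ^ 2 * S) := by
            apply mul_lt_mul_of_pos_left _ hSpos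
            exact mul_lt_mul_of_pos_right hF2lt hSpos
        _ = (t * S) ^ 2 := by ring
    exact abs_lt_of_sq_lt_sq hlt (by positivity)
  have hHermW : W.IsHermitian := by
    rw [Matrix.IsHermitian, Matrix.conjTranspose]
    exact hW
  have hdotS : ∀ x : Fin n → ℝ, x ⬝ᵥ x = ∑ i, x i ^ 2 := fun x => by
    simp [dotProduct, sq]
  refine ⟨hopnorm, hentries, Matrix.posDef_iff_dotProduct_mulVec.mpr ⟨?_, ?_⟩,
    Matrix.posDef_iff_dotProduct_mulVec.mpr ⟨?_, ?_⟩⟩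
  · rw [Matrix.IsHermitian, Matrix.conjTranspose_sub, Matrix.conjTranspose_smul, hHermW.eq]
    simp
  · intro x hx
    have := hquad x hx
    rw [abs_lt] at this
    simp only [star_trivial, Matrix.sub_mulVec, Matrix.smul_mulVec, Matrix.one_mulVec,
      dotProduct_sub, dotProduct_smul, smul_eq_mul, hdotS]
    linarith [this.2]
  · rw [Matrix.IsHermitian, Matrix.conjTranspose_add, Matrix.conjTranspose_smul, hHermW.eq]
    simp
  · intro x hx
    have := hquad x hx
    rw [abs_lt] at this
    simp only [star_trivial, Matrix.add_mulVec, Matrix.smul_mulVec, Matrix.one_mulVec,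
      dotProduct_add, dotProduct_smul, smul_eq_mul, hdotS]
    linarith [this.1]
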